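/- Let q ≥ 1, let n ≥ 1, and let f be a formal power series in q variables over ℝ with ord f = m ∈ ℕ, m > 0, whose initial block is a single monomial f_α·X^α (|α| = m), and suppose f = (f_α·X^α)·g for some q-fps g with g_θ = 1. If h is a q-fps with h^n = f, then n·(ord h) = m, the initial block of h is a single monomial h_{c̄}·X^{c̄} for some multi-index c̄ with |c̄| = ord h, and moreover (h_{c̄})^n = f_α and n·c̄ = α (componentwise). -/

import Mathlib

open Finset MvPowerSeries

private lemma degree_sum' {q : ℕ} {ι : Type*} (s : Finset ι) (f : ι → (Fin q →₀ ℕ)) :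
    (∑ i ∈ s, f i).degree = ∑ i ∈ s, (f i).degree := by
  simp only [Finsupp.degree_eq_weight_one]
  exact map_sum _ _ _

private lemma degree_nsmul' {q : ℕ} (n : ℕ) (c : Fin q →₀ ℕ) :
    (n • c).degree = n * c.degree := by
  simp only [Finsupp.degree_eq_weight_one, map_nsmul, smul_eq_mul]

/-- Coefficients of `h ^ n` below `n * s` vanish when `s ≤ ord h`. -/
private lemma aux_low {q n : ℕ} (h : MvPowerSeries (Fin q) ℝ) {s : ℕ}
    (hs : (s : ℕ∞) ≤ h.order) (d : Fin q →₀ ℕ) (hd : d.degree < n * s) :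
    MvPowerSeries.coeff d (h ^ n) = 0 := by
  classical
  rw [MvPowerSeries.coeff_pow]
  apply Finset.sum_eq_zero
  intro l hl
  rw [Finset.mem_finsuppAntidiag] at hl
  have hdegsum : ∑ i ∈ Finset.range n, (l i).degree = d.degree := by
    rw [← degree_sum', hl.1]
  have hex : ∃ i ∈ Finset.range n, (l i).degree < s := by
    by_contra hc
    push_neg at hc
    have : (n * s : ℕ) ≤ d.degree := by
      calc n * s = ∑ _i ∈ Finset.range n, s := by
            rw [Finset.sum_const, Finset.card_range, smul_eq_mul]
        _ ≤ ∑ i ∈ Finset.range n, (l i).degree := Finset.sum_le_sum hc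
        _ = d.degree := hdegsum
    omega
  obtain ⟨i, hi, hlt⟩ := hex
  refine Finset.prod_eq_zero hi (MvPowerSeries.coeff_of_lt_order ?_)
  exact lt_of_lt_of_le (by exact_mod_cast hlt) hs

/-- If `c0` is extremal (w.r.t. an injective additive embedding into a linearly
ordered cancellative monoid) among degree-`s` exponents with nonzero coefficient,
then the coefficient of `h ^ n` at `n • c0` is the `n`-th power of that of `h` at `c0`. -/
private lemma aux_key {q n : ℕ} (h : MvPowerSeries (Fin q) ℝ) {s : ℕ}
    (hs : (s : ℕ∞) ≤ h.order) {M : Type} [AddCommMonoid M] [LinearOrder M] [IsOrderedCancelAddMonoid M]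
    (ψ : (Fin q →₀ ℕ) →+ M) (hψ : Function.Injective ψ)
    (c0 : Fin q →₀ ℕ) (hc0 : c0.degree = s)
    (hmin : ∀ c : Fin q →₀ ℕ, c.degree = s → MvPowerSeries.coeff c h ≠ 0 → ψ c0 ≤ ψ c) :
    MvPowerSeries.coeff (n • c0) (h ^ n) = (MvPowerSeries.coeff c0 h) ^ n := by
  classical
  rw [MvPowerSeries.coeff_pow]
  set l0 : ℕ →₀ (Fin q →₀ ℕ) := Finsupp.indicator (Finset.range n) (fun _ _ => c0) with hl0
  have hl0app : ∀ i ∈ Finset.range n, l0 i = c0 := fun i hi =>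
    Finsupp.indicator_of_mem hi _
  have hl0mem : l0 ∈ Finset.finsuppAntidiag (Finset.range n) (n • c0) := by
    rw [Finset.mem_finsuppAntidiag]
    refine ⟨?_, Finsupp.support_indicator_subset _ _⟩
    rw [Finset.sum_congr rfl hl0app, Finset.sum_const, Finset.card_range]
  rw [Finset.sum_eq_single_of_mem l0 hl0mem ?_]
  · rw [Finset.prod_congr rfl (fun i hi => by rw [hl0app i hi]), Finset.prod_const,
      Finset.card_range]
  · intro l hl hne
    by_contra hprod
    have hfac : ∀ i ∈ Finset.range n, MvPowerSeries.coeff (l i) h ≠ 0 := fun i hi hz =>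
      hprod (Finset.prod_eq_zero hi hz)
    rw [Finset.mem_finsuppAntidiag] at hl
    have hdegsum : ∑ i ∈ Finset.range n, (l i).degree = n * s := by
      rw [← degree_sum']
      rw [show ∑ i ∈ Finset.range n, l i = (Finset.range n).sum l from rfl, hl.1,
        degree_nsmul', hc0]
    have hge : ∀ i ∈ Finset.range n, s ≤ (l i).degree := by
      intro i hi
      by_contra hlt
      push_neg at hlt
      exact hfac i hi (MvPowerSeries.coeff_of_lt_order
        (lt_of_lt_of_le (by exact_mod_cast hlt) hs))
    have hdeq : ∀ i ∈ Finset.range n, (l i).degree = s := by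
      have hsum : (∑ _i ∈ Finset.range n, s) = ∑ i ∈ Finset.range n, (l i).degree := by
        rw [Finset.sum_const, Finset.card_range, smul_eq_mul, hdegsum]
      intro i hi
      exact ((Finset.sum_eq_sum_iff_of_le hge).mp hsum i hi).symm
    have hψge : ∀ i ∈ Finset.range n, ψ c0 ≤ ψ (l i) := fun i hi =>
      hmin _ (hdeq i hi) (hfac i hi)
    have hψsum : (∑ _i ∈ Finset.range n, ψ c0) = ∑ i ∈ Finset.range n, ψ (l i) := by
      calc (∑ _i ∈ Finset.range n, ψ c0) = (Finset.range n).card • ψ c0 := by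
            rw [Finset.sum_const]
        _ = ψ ((Finset.range n).card • c0) := (map_nsmul ψ _ _).symm
        _ = ψ ((Finset.range n).sum ⇑l) := by rw [Finset.card_range, hl.1]
        _ = ∑ i ∈ Finset.range n, ψ (l i) := map_sum ψ _ _
    have heq : ∀ i ∈ Finset.range n, ψ c0 = ψ (l i) :=
      (Finset.sum_eq_sum_iff_of_le hψge).mp hψsum
    apply hne
    ext i
    by_cases hi : i ∈ Finset.range n
    · rw [hl0app i hi]
      exact congrFun (congrArg _ (hψ (heq i hi)).symm) _
    · have h1 : l i = 0 := Finsupp.notMem_support_iff.mp (fun hmem => hi (hl.2 hmem))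
      have h2 : l0 i = 0 := Finsupp.indicator_of_notMem hi _
      rw [h1, h2]

private def lexHom (q : ℕ) : (Fin q →₀ ℕ) →+ Lex (Fin q →₀ ℕ) where
  toFun := toLex
  map_zero' := rfl
  map_add' := fun _ _ => rfl

private def lexHomDual (q : ℕ) : (Fin q →₀ ℕ) →+ (Lex (Fin q →₀ ℕ))ᵒᵈ where
  toFun := fun c => OrderDual.toDual (toLex c)
  map_zero' := rfl
  map_add' := fun _ _ => rfl

/-- Suppose `f` over `ℝ` has positive order `m`, initial block a single monomial
`f_α · X^α` (`|α| = m`), and `f = (f_α · X^α) · g` with `g_θ = 1`. If `h ^ n = f`,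
then `n · ord h = m`, the initial block of `h` is a single monomial `h_c̄ · X^c̄`
with `|c̄| = ord h`, `(h_c̄)^n = f_α` and `n • c̄ = α`. -/
theorem nthRoot_initial_block_monomial {q n m : ℕ} (hq : 1 ≤ q) (hn : 1 ≤ n)
    (hm : 0 < m) (f g h : MvPowerSeries (Fin q) ℝ) (α : Fin q →₀ ℕ)
    (hord : f.order = (m : ℕ∞)) (hα : α.degree = m)
    (hblock : ∀ c : Fin q →₀ ℕ, c.degree = m → c ≠ α → MvPowerSeries.coeff c f = 0)
    (hgθ : MvPowerSeries.constantCoeff g = 1)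
    (hfact : f = (MvPowerSeries.monomial α (MvPowerSeries.coeff α f)) * g)
    (hh : h ^ n = f) :
    ∃ cbar : Fin q →₀ ℕ,
      h.order = (cbar.degree : ℕ∞) ∧
      n * cbar.degree = m ∧
      (∀ c : Fin q →₀ ℕ, c.degree = cbar.degree → c ≠ cbar →
        MvPowerSeries.coeff c h = 0) ∧
      (MvPowerSeries.coeff cbar h) ^ n = MvPowerSeries.coeff α f ∧
      n • cbar = α := by
  classical
  have hf0 : f ≠ 0 := by
    intro h0
    rw [h0, MvPowerSeries.order_zero] at hord
    exact (ENat.top_ne_coe m) hord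
  -- coefficient at α is nonzero
  have hford : (f.order.toNat : ℕ∞) = f.order := by rw [hord]; simp
  have hα_ne : MvPowerSeries.coeff α f ≠ 0 := by
    obtain ⟨d, hd, hdeg⟩ := MvPowerSeries.exists_coeff_ne_zero_and_order hford
    rw [hord] at hdeg
    have hdm : d.degree = m := by exact_mod_cast hdeg
    rcases eq_or_ne d α with rfl | hne
    · exact hd
    · exact absurd (hblock d hdm hne) hd
  have hn0 : n ≠ 0 := by omega
  have hh0 : h ≠ 0 := by
    intro h0
    rw [h0, zero_pow hn0] at hh
    exact hf0 hh.symm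
  have horder_nat : (h.order.toNat : ℕ∞) = h.order :=
    MvPowerSeries.ne_zero_iff_order_finite.mp hh0
  set s : ℕ := h.order.toNat with hs_def
  have hords : h.order = (s : ℕ∞) := horder_nat.symm
  have hsle : (s : ℕ∞) ≤ h.order := le_of_eq horder_nat
  -- a nonzero coefficient of h at degree s
  obtain ⟨d, hd, hdeg⟩ := MvPowerSeries.exists_coeff_ne_zero_and_order horder_nat
  have hdeg' : d.degree = s := by rw [hords] at hdeg; exact_mod_cast hdeg
  -- constant coefficient of h vanishes, hence s > 0
  have hconstf : MvPowerSeries.coeff 0 f = 0 := by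
    apply MvPowerSeries.coeff_of_lt_order
    rw [hord, map_zero]
    exact_mod_cast hm
  have hconsth : MvPowerSeries.coeff 0 h = 0 := by
    have : (MvPowerSeries.coeff 0 h) ^ n = 0 := by
      rw [MvPowerSeries.coeff_zero_eq_constantCoeff] at hconstf ⊢
      rw [← map_pow, hh, hconstf]
    exact pow_eq_zero_iff hn0 |>.mp this
  have hs_pos : 0 < s := by
    rcases Nat.eq_zero_or_pos s with h0 | h0
    · rw [h0] at hdeg'
      rw [(Finsupp.degree_eq_zero_iff d).mp hdeg'] at hd
      exact absurd hconsth hd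
    · exact h0
  -- the finite set of degree-s exponents with nonzero coefficient
  have hfin : {c : Fin q →₀ ℕ | c.degree = s ∧ MvPowerSeries.coeff c h ≠ 0}.Finite :=
    (Finsupp.finite_of_degree_le s).subset (fun c hc => le_of_eq hc.1)
  set F : Finset (Fin q →₀ ℕ) := hfin.toFinset with hF_def
  have hmemF : ∀ c, c ∈ F ↔ c.degree = s ∧ MvPowerSeries.coeff c h ≠ 0 := fun c =>
    hfin.mem_toFinset
  have hFne : F.Nonempty := ⟨d, (hmemF d).mpr ⟨hdeg', hd⟩⟩
  obtain ⟨cmin, hcminF, hcmin⟩ := F.exists_min_image (fun c => toLex c) hFne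
  obtain ⟨cmax, hcmaxF, hcmax⟩ := F.exists_max_image (fun c => toLex c) hFne
  rw [hmemF] at hcminF hcmaxF
  -- key coefficient identities
  have hinj1 : Function.Injective (lexHom q) := fun a b hab => toLex.injective hab
  have hinj2 : Function.Injective (lexHomDual q) := fun a b hab =>
    toLex.injective (OrderDual.toDual.injective hab)
  have key_min : MvPowerSeries.coeff (n • cmin) (h ^ n) =
      (MvPowerSeries.coeff cmin h) ^ n := by
    refine aux_key h hsle (lexHom q) hinj1 cmin hcminF.1 ?_
    intro c hc hcne
    exact hcmin c ((hmemF c).mpr ⟨hc, hcne⟩)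
  have key_max : MvPowerSeries.coeff (n • cmax) (h ^ n) =
      (MvPowerSeries.coeff cmax h) ^ n := by
    refine aux_key h hsle (lexHomDual q) hinj2 cmax hcmaxF.1 ?_
    intro c hc hcne
    exact hcmax c ((hmemF c).mpr ⟨hc, hcne⟩)
  have hne_min : MvPowerSeries.coeff (n • cmin) f ≠ 0 := by
    rw [← hh, key_min]
    exact pow_ne_zero n hcminF.2
  have hne_max : MvPowerSeries.coeff (n • cmax) f ≠ 0 := by
    rw [← hh, key_max]
    exact pow_ne_zero n hcmaxF.2
  have hdeg_min : (n • cmin).degree = n * s := by rw [degree_nsmul', hcminF.1]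
  have hdeg_max : (n • cmax).degree = n * s := by rw [degree_nsmul', hcmaxF.1]
  -- m = n * s
  have hm_le : m ≤ n * s := by
    have := MvPowerSeries.order_le hne_min
    rw [hord, hdeg_min] at this
    exact_mod_cast this
  have hns : n * s = m := by
    rcases lt_or_eq_of_le hm_le with hlt | heq
    · exfalso
      apply hα_ne
      rw [← hh]
      exact aux_low h hsle α (by rw [hα]; exact hlt)
    · exact heq.symm
  -- n • cmin = α = n • cmax
  have hmin_eq : n • cmin = α := by
    by_contra hne
    exact hne_min (hblock _ (by rw [hdeg_min, hns]) hne)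
  have hmax_eq : n • cmax = α := by
    by_contra hne
    exact hne_max (hblock _ (by rw [hdeg_max, hns]) hne)
  have hminmax : cmin = cmax := by
    have hsm : n • cmin = n • cmax := by rw [hmin_eq, hmax_eq]
    ext a
    have := congrFun (congrArg (fun x : Fin q →₀ ℕ => (x : Fin q → ℕ)) hsm) a
    simp only [Finsupp.coe_smul, Pi.smul_apply, smul_eq_mul] at this
    exact Nat.eq_of_mul_eq_mul_left (by omega) this
  refine ⟨cmin, ?_, ?_, ?_, ?_, hmin_eq⟩
  · rw [hords, hcminF.1]
  · rw [hcminF.1, hns]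
  · intro c hc hcne
    by_contra hcoeff
    have hcF : c ∈ F := (hmemF c).mpr ⟨by rw [hc, hcminF.1], hcoeff⟩
    have h1 : toLex cmin ≤ toLex c := hcmin c hcF
    have h2 : toLex c ≤ toLex cmax := hcmax c hcF
    rw [← hminmax] at h2
    exact hcne (toLex.injective (le_antisymm h2 h1))
  · rw [← hmin_eq, ← hh, key_min]
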